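/- Let p > 1, let (X,d,m) be a metric measure space, let (E,F) be a p-energy on (X,d,m) with p-energy measure Γ, and let Ψ be a doubling function. Assume the volume doubling condition (VD) and the capacity upper bound cap(Ψ)_≤. Then there exists C_cut > 0, depending only on p, C_Ψ, C_VD, C_cap and A_cap, such that for any ε ∈ (0, diam X) and any ε-net V ⊆ X, there exists a family {ψ_z ∈ F : z ∈ V} satisfying: (CO1) for each z ∈ V, 0 ≤ ψ_z ≤ 1 on X, ψ_z = 1 on B(z, ε/4), and ψ_z = 0 on X∖B(z, 5ε/4); (CO2) Σ_{z∈V} ψ_z = 1 on X; (CO3) for each z ∈ V, E(ψ_z) ≤ C_cut·V(z,ε)/Ψ(ε). -/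

import Mathlib

/-- A metric measure space: a locally compact separable metric space equipped with a
positive Radon measure with full support. -/
structure MetricMeasureSpace : Type 1 where
  X : Type
  [ms : MetricSpace X]
  [lc : LocallyCompactSpace X]
  [sep : TopologicalSpace.SeparableSpace X]
  [mb : MeasurableSpace X]
  [bs : BorelSpace X]
  m : MeasureTheory.Measure X
  [radon : m.Regular]
  [fullSupport : m.IsOpenPosMeasure]

attribute [instance] MetricMeasureSpace.ms MetricMeasureSpace.lc MetricMeasureSpace.sep
  MetricMeasureSpace.mb MetricMeasureSpace.bs MetricMeasureSpace.radon
  MetricMeasureSpace.fullSupport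


open MeasureTheory Metric Set Filter Topology ENNReal

noncomputable section

/-- A doubling function (a homeomorphism of `[0,∞)`, hence strictly increasing with `Φ 0 = 0`)
with doubling constant `C`. -/
structure DoublingFn (Φ : ℝ → ℝ) (C : ℝ) : Prop where
  map_zero : Φ 0 = 0
  pos : ∀ r : ℝ, 0 < r → 0 < Φ r
  strictMonoOn : StrictMonoOn Φ (Set.Ici 0)
  continuousOn : ContinuousOn Φ (Set.Ici 0)
  surjOn : Set.SurjOn Φ (Set.Ici 0) (Set.Ici 0)
  one_lt : 1 < C
  doubling : ∀ r : ℝ, 0 < r → Φ (2 * r) ≤ C * Φ r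

/-- Two-sided power scaling assumption on a scaling function `Ψ`. -/
def PowerScaling (Ψ : ℝ → ℝ) : Prop :=
  ∃ β₁ β₂ C : ℝ, 0 < β₁ ∧ β₁ ≤ β₂ ∧ 1 < C ∧
    ∀ r R : ℝ, 0 < r → r ≤ R →
      (1 / C) * (R / r) ^ β₁ ≤ Ψ R / Ψ r ∧ Ψ R / Ψ r ≤ C * (R / r) ^ β₂

/-- The two-sided `p`-Clarkson inequality for the quadruple
`a = E(f+g)`, `b = E(f−g)`, `c = E(f)`, `d = E(g)`. -/
def ClarksonPair (p a b c d : ℝ) : Prop :=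
  (p ≤ 2 → 2 * (c ^ (1 / (p - 1)) + d ^ (1 / (p - 1))) ^ (p - 1) ≤ a + b) ∧
  (2 ≤ p → a + b ≤ 2 * (c ^ (1 / (p - 1)) + d ^ (1 / (p - 1))) ^ (p - 1))

/-- The chain condition (CC). -/
def ChainCond (X : Type*) [MetricSpace X] : Prop :=
  ∃ C : ℝ, 0 < C ∧ ∀ x y : X, ∀ n : ℕ, 0 < n →
    ∃ c : ℕ → X, c 0 = x ∧ c n = y ∧
      ∀ k : ℕ, 1 ≤ k → k ≤ n → dist (c k) (c (k - 1)) ≤ C * dist x y / n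

variable {X : Type*}

/-- A `p`-energy on a metric measure space `(X, d, m)`. The domain `F` is a dense
subspace of `L^p(X; m)` and `E` satisfies the semi-norm, closedness (Banach),
Markovian, regularity, strong locality and `p`-Clarkson axioms. -/
structure PEnergy (p : ℝ) [MetricSpace X] [MeasurableSpace X] (m : Measure X) where
  F : Set (X → ℝ)
  E : (X → ℝ) → ℝ
  memLp : ∀ f ∈ F, MemLp f (ENNReal.ofReal p) m
  add_mem : ∀ f ∈ F, ∀ g ∈ F, f + g ∈ F
  smul_mem : ∀ (c : ℝ), ∀ f ∈ F, c • f ∈ F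
  nonneg : ∀ f ∈ F, 0 ≤ E f
  norm_smul : ∀ (c : ℝ), ∀ f ∈ F, E (c • f) ^ (1 / p) = |c| * E f ^ (1 / p)
  norm_triangle : ∀ f ∈ F, ∀ g ∈ F, E (f + g) ^ (1 / p) ≤ E f ^ (1 / p) + E g ^ (1 / p)
  denseLp : ∀ f : X → ℝ, MemLp f (ENNReal.ofReal p) m → ∀ ε : ℝ, 0 < ε →
    ∃ g ∈ F, eLpNorm (f - g) (ENNReal.ofReal p) m < ENNReal.ofReal ε
  complete : ∀ u : ℕ → X → ℝ, (∀ n, u n ∈ F) →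
    (∀ ε : ℝ, 0 < ε → ∃ N : ℕ, ∀ i ≥ N, ∀ j ≥ N,
      E (u i - u j) ^ (1 / p) + (eLpNorm (u i - u j) (ENNReal.ofReal p) m).toReal < ε) →
    ∃ f ∈ F, Tendsto
      (fun n => E (u n - f) ^ (1 / p) + (eLpNorm (u n - f) (ENNReal.ofReal p) m).toReal)
      atTop (𝓝 0)
  markovian : ∀ φ : ℝ → ℝ, Continuous φ → φ 0 = 0 → (∀ s t : ℝ, |φ t - φ s| ≤ |t - s|) →
    ∀ f ∈ F, φ ∘ f ∈ F ∧ E (φ ∘ f) ≤ E f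
  regular_unifDense : ∀ g : X → ℝ, Continuous g → HasCompactSupport g → ∀ ε : ℝ, 0 < ε →
    ∃ f ∈ F, Continuous f ∧ HasCompactSupport f ∧ ∀ x, |f x - g x| ≤ ε
  regular_energyDense : ∀ f ∈ F, ∀ ε : ℝ, 0 < ε → ∃ g ∈ F, Continuous g ∧ HasCompactSupport g ∧
    E (f - g) ^ (1 / p) + (eLpNorm (f - g) (ENNReal.ofReal p) m).toReal < ε
  stronglyLocal : ∀ f ∈ F, ∀ g ∈ F, HasCompactSupport f → HasCompactSupport g →
    (∃ U : Set X, IsOpen U ∧ tsupport f ⊆ U ∧ ∃ c : ℝ, ∀ x ∈ U, g x = c) →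
    E (f + g) = E f + E g
  clarkson : ∀ f ∈ F, ∀ g ∈ F, ClarksonPair p (E (f + g)) (E (f - g)) (E f) (E g)

/-- A `p`-energy measure associated with a `p`-energy `(E, F)`. -/
structure PEnergyMeasure (p : ℝ) [MetricSpace X] [MeasurableSpace X] (m : Measure X)
    (PE : PEnergy p m) where
  Γ : (X → ℝ) → Measure X
  radon : ∀ f ∈ PE.F, (Γ f).Regular
  total : ∀ f ∈ PE.F, Γ f Set.univ = ENNReal.ofReal (PE.E f)
  norm_smul : ∀ A : Set X, MeasurableSet A → ∀ (c : ℝ), ∀ f ∈ PE.F,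
    (Γ (c • f) A).toReal ^ (1 / p) = |c| * (Γ f A).toReal ^ (1 / p)
  norm_triangle : ∀ A : Set X, MeasurableSet A → ∀ f ∈ PE.F, ∀ g ∈ PE.F,
    (Γ (f + g) A).toReal ^ (1 / p) ≤ (Γ f A).toReal ^ (1 / p) + (Γ g A).toReal ^ (1 / p)
  locality : ∀ A : Set X, MeasurableSet A →
    ∀ f ∈ PE.F, ∀ g ∈ PE.F, Continuous f → HasCompactSupport f →
      Continuous g → HasCompactSupport g →
      (∃ c : ℝ, ∀ x ∈ A, f x - g x = c) → Γ f A = Γ g A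
  clarkson : ∀ A : Set X, MeasurableSet A → ∀ f ∈ PE.F, ∀ g ∈ PE.F,
    ClarksonPair p (Γ (f + g) A).toReal (Γ (f - g) A).toReal (Γ f A).toReal (Γ g A).toReal
  chainRule : ∀ f ∈ PE.F, Continuous f → HasCompactSupport f →
    ∀ φ : ℝ → ℝ, ContDiff ℝ 1 φ → φ ∘ f ∈ PE.F →
      Γ (φ ∘ f) = (Γ f).withDensity fun x => ENNReal.ofReal (|deriv φ (f x)| ^ p)

/-- Volume doubling condition (VD). -/
def VolDoubling [MetricSpace X] [MeasurableSpace X] (m : Measure X) : Prop :=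
  ∃ C : ℝ, 0 < C ∧ ∀ (x : X) (r : ℝ), 0 < r →
    m (ball x (2 * r)) ≤ ENNReal.ofReal C * m (ball x r)

/-- Volume regularity condition V(Φ). -/
def VolRegular [MetricSpace X] [MeasurableSpace X] (m : Measure X) (Φ : ℝ → ℝ) : Prop :=
  ∃ C : ℝ, 0 < C ∧ ∀ (x : X) (r : ℝ), 0 < r →
    ENNReal.ofReal r < EMetric.diam (Set.univ : Set X) →
      ENNReal.ofReal (Φ r / C) ≤ m (ball x r) ∧ m (ball x r) ≤ ENNReal.ofReal (C * Φ r)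

/-- The Poincaré inequality PI(Ψ). -/
def PoincareIneq (p : ℝ) [MetricSpace X] [MeasurableSpace X] (m : Measure X)
    (PE : PEnergy p m) (GM : PEnergyMeasure p m PE) (Ψ : ℝ → ℝ) : Prop :=
  ∃ C : ℝ, 0 < C ∧ ∃ A : ℝ, 1 ≤ A ∧ ∀ (x : X) (r : ℝ), 0 < r →
    ENNReal.ofReal (A * r) < EMetric.diam (Set.univ : Set X) →
    ∀ f ∈ PE.F,
      ∫⁻ y in ball x r, ENNReal.ofReal (|f y - ⨍ z in ball x r, f z ∂m| ^ p) ∂m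
        ≤ ENNReal.ofReal (C * Ψ r) * GM.Γ f (ball x (A * r))

/-- The capacity between two sets `A₁` and `A₂` associated with a `p`-energy,
with the convention `sInf ∅ = ∞`. -/
def capBetween (p : ℝ) [MetricSpace X] [MeasurableSpace X] (m : Measure X)
    (PE : PEnergy p m) (A₁ A₂ : Set X) : ℝ≥0∞ :=
  sInf ((fun φ => ENNReal.ofReal (PE.E φ)) ''
    {φ : X → ℝ | φ ∈ PE.F ∧ (∃ U : Set X, IsOpen U ∧ A₁ ⊆ U ∧ ∀ x ∈ U, φ x = 1) ∧
      (∃ V : Set X, IsOpen V ∧ A₂ ⊆ V ∧ ∀ x ∈ V, φ x = 0)})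

/-- Capacity upper bound cap(Ψ)_≤. -/
def CapUpper (p : ℝ) [MetricSpace X] [MeasurableSpace X] (m : Measure X)
    (PE : PEnergy p m) (Ψ : ℝ → ℝ) : Prop :=
  ∃ C : ℝ, 0 < C ∧ ∃ A : ℝ, 1 < A ∧ ∀ (x : X) (r : ℝ), 0 < r →
    capBetween p m PE (ball x r) (ball x (A * r))ᶜ
      ≤ ENNReal.ofReal C * m (ball x r) / ENNReal.ofReal (Ψ r)

/-- Two-sided capacity bounds cap(Ψ): upper and lower bound with common constants. -/
def CapBounds (p : ℝ) [MetricSpace X] [MeasurableSpace X] (m : Measure X)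
    (PE : PEnergy p m) (Ψ : ℝ → ℝ) : Prop :=
  ∃ C : ℝ, 0 < C ∧ ∃ A : ℝ, 1 < A ∧ ∀ (x : X) (r : ℝ), 0 < r →
    capBetween p m PE (ball x r) (ball x (A * r))ᶜ
      ≤ ENNReal.ofReal C * m (ball x r) / ENNReal.ofReal (Ψ r) ∧
    m (ball x r) / ENNReal.ofReal (C * Ψ r)
      ≤ capBetween p m PE (ball x r) (ball x (A * r))ᶜ

/-- `E₁(u) = E(u) + ‖u‖_{L^p}^p`. -/
def E1 (p : ℝ) [MetricSpace X] [MeasurableSpace X] (m : Measure X) (PE : PEnergy p m)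
    (u : X → ℝ) : ℝ :=
  PE.E u + (eLpNorm u (ENNReal.ofReal p) m).toReal ^ p

/-- The directional derivative `E₁(u; v) = (1/p) d/dt E₁(u + t v)|_{t=0}`. -/
def E1dir (p : ℝ) [MetricSpace X] [MeasurableSpace X] (m : Measure X) (PE : PEnergy p m)
    (u v : X → ℝ) : ℝ :=
  (1 / p) * deriv (fun t : ℝ => E1 p m PE (u + t • v)) 0

/-- The capacity `cap₁` of an open set, with the convention `sInf ∅ = ∞`. -/
def cap1Open (p : ℝ) [MetricSpace X] [MeasurableSpace X] (m : Measure X) (PE : PEnergy p m)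
    (A : Set X) : ℝ≥0∞ :=
  sInf ((fun u => ENNReal.ofReal (E1 p m PE u)) ''
    {u : X → ℝ | u ∈ PE.F ∧ ∀ᵐ x ∂(m.restrict A), 1 ≤ u x})

/-- The capacity `cap₁` of an arbitrary set. -/
def cap1 (p : ℝ) [MetricSpace X] [MeasurableSpace X] (m : Measure X) (PE : PEnergy p m)
    (A : Set X) : ℝ≥0∞ :=
  ⨅ (B : Set X) (_ : IsOpen B) (_ : A ⊆ B), cap1Open p m PE B

/-- `u` is quasi-continuous on `G`. -/
def QuasiContinuousOn (p : ℝ) [MetricSpace X] [MeasurableSpace X] (m : Measure X)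
    (PE : PEnergy p m) (u : X → ℝ) (G : Set X) : Prop :=
  ∀ ε : ℝ, 0 < ε → ∃ G' : Set X, IsOpen G' ∧ cap1 p m PE G' < ENNReal.ofReal ε ∧
    ContinuousOn u (G \ G')

/-- `u` is quasi-continuous (on all of `X`). -/
def QuasiContinuous (p : ℝ) [MetricSpace X] [MeasurableSpace X] (m : Measure X)
    (PE : PEnergy p m) (u : X → ℝ) : Prop :=
  QuasiContinuousOn p m PE u Set.univ

/-- `φ` is a cutoff function for `B(x,r) ⊆ B(x, A·r)`. -/
def IsCutoff (p : ℝ) [MetricSpace X] [MeasurableSpace X] (m : Measure X) (PE : PEnergy p m)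
    (x : X) (r A : ℝ) (φ : X → ℝ) : Prop :=
  φ ∈ PE.F ∧ (∀ y, 0 ≤ φ y ∧ φ y ≤ 1) ∧
    (∃ U : Set X, IsOpen U ∧ closure (ball x r) ⊆ U ∧ ∀ y ∈ U, φ y = 1) ∧
    tsupport φ ⊆ ball x (A * r)

/-- The cutoff Sobolev inequality CS(Ψ). -/
def CutoffSobolev (p : ℝ) [MetricSpace X] [MeasurableSpace X] (m : Measure X)
    (PE : PEnergy p m) (GM : PEnergyMeasure p m PE) (Ψ : ℝ → ℝ) : Prop :=
  ∃ C₁ C₂ A : ℝ, 0 < C₁ ∧ 0 < C₂ ∧ 1 < A ∧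
    ∀ (x : X) (r : ℝ), 0 < r → ∃ φ : X → ℝ, IsCutoff p m PE x r A φ ∧
      ∀ f ∈ PE.F, ∀ ft : X → ℝ, QuasiContinuous p m PE ft → ft =ᵐ[m] f →
        ∫⁻ y in ball x (A * r), ENNReal.ofReal (|ft y| ^ p) ∂(GM.Γ φ)
          ≤ ENNReal.ofReal C₁ * GM.Γ f (ball x (A * r)) +
            ENNReal.ofReal C₂ / ENNReal.ofReal (Ψ r) *
              ∫⁻ y in ball x (A * r), ENNReal.ofReal (|f y| ^ p) ∂m

/-- An `ε`-net. -/
def IsNet [MetricSpace X] (ε : ℝ) (V : Set X) : Prop :=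
  (∀ x ∈ V, ∀ y ∈ V, x ≠ y → ε ≤ dist x y) ∧ ∀ z : X, ∃ x ∈ V, dist x z < ε

/-- The local domain `F_loc`. -/
def FLoc (p : ℝ) [MetricSpace X] [MeasurableSpace X] (m : Measure X) (PE : PEnergy p m) :
    Set (X → ℝ) :=
  {u : X → ℝ | ∀ U : Set X, IsOpen U → IsCompact (closure U) →
    ∃ f ∈ PE.F, ∀ᵐ x ∂(m.restrict U), u x = f x}

/-- `ν` is the energy measure of `u ∈ F_loc`, i.e. `ν` agrees with `Γ(u^#)` on every
relatively compact open set `U` on which `u` has a representative `u^# ∈ F`. -/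
def LocalEnergyMeasure (p : ℝ) [MetricSpace X] [MeasurableSpace X] (m : Measure X)
    (PE : PEnergy p m) (GM : PEnergyMeasure p m PE) (u : X → ℝ) (ν : Measure X) : Prop :=
  ∀ U : Set X, IsOpen U → IsCompact (closure U) → ∀ f ∈ PE.F,
    (∀ᵐ x ∂(m.restrict U), u x = f x) → ν.restrict U = (GM.Γ f).restrict U

/-- The restricted maximal function `M_R ν(x) = sup_{0<r<R} ν(B(x,r))/m(B(x,r))`. -/
def maxFn [MetricSpace X] [MeasurableSpace X] (m ν : Measure X) (R : ℝ) (x : X) : ℝ≥0∞ :=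
  ⨆ (r : ℝ) (_ : 0 < r) (_ : r < R), ν (ball x r) / m (ball x r)

/-- A geodesic metric space: any two points are joined by an isometric embedding of
`[0, dist x y]`. -/
def IsGeodesicSpace (X : Type*) [MetricSpace X] : Prop :=
  ∀ x y : X, ∃ γ : ℝ → X, γ 0 = x ∧ γ (dist x y) = y ∧
    ∀ s ∈ Set.Icc 0 (dist x y), ∀ t ∈ Set.Icc 0 (dist x y), dist (γ s) (γ t) = |s - t|

/-- Membership in the Besov space `B^{p,α}(X,d,m)`. -/
def MemBesov (p α : ℝ) [MetricSpace X] [MeasurableSpace X] (m : Measure X) (f : X → ℝ) :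
    Prop :=
  MemLp f (ENNReal.ofReal p) m ∧
  ∃ M : ℝ≥0∞, M ≠ ⊤ ∧ ∀ r : ℝ, 0 < r → ENNReal.ofReal r < EMetric.diam (Set.univ : Set X) →
    ENNReal.ofReal (1 / r ^ (p * α)) *
      ∫⁻ x, (m (ball x r))⁻¹ * ∫⁻ y in ball x r, ENNReal.ofReal (|f x - f y| ^ p) ∂m ∂m ≤ M

/-- The critical Besov exponent `β_p(X,d,m) = p · α_p(X,d,m)`. -/
def besovCriticalBeta (p : ℝ) (X : Type*) [MetricSpace X] [MeasurableSpace X]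
    (m : Measure X) : ℝ :=
  p * sSup {α : ℝ | 0 < α ∧ ∃ f : X → ℝ, MemBesov p α m f ∧ ¬ ∃ c : ℝ, f =ᵐ[m] fun _ => c}

/-- `ut` is a quasi-continuous modification of `u`. -/
def QCModification (p : ℝ) {X : Type*} [MetricSpace X] [MeasurableSpace X] (m : Measure X)
    (PE : PEnergy p m) (u ut : X → ℝ) : Prop :=
  QuasiContinuous p m PE ut ∧ ut =ᵐ[m] u

/-- A pointwise property holds quasi-everywhere on `A`. -/
def QEOn (p : ℝ) {X : Type*} [MetricSpace X] [MeasurableSpace X] (m : Measure X)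
    (PE : PEnergy p m) (A : Set X) (P : X → Prop) : Prop :=
  ∃ N : Set X, cap1 p m PE N = 0 ∧ ∀ x ∈ A \ N, P x

/-- `L_A = {u ∈ F : ũ ≥ 1 q.e. on A}` for an arbitrary set `A`. -/
def LSet (p : ℝ) {X : Type*} [MetricSpace X] [MeasurableSpace X] (m : Measure X)
    (PE : PEnergy p m) (A : Set X) : Set (X → ℝ) :=
  {u : X → ℝ | u ∈ PE.F ∧ ∃ ut : X → ℝ, QCModification p m PE u ut ∧
    QEOn p m PE A fun x => 1 ≤ ut x}

end


section Contractions

/-- clamp to [0,1] -/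
noncomputable def clamp01 (t : ℝ) : ℝ := min (max t 0) 1

lemma clamp01_zero : clamp01 0 = 0 := by simp [clamp01]
lemma clamp01_continuous : Continuous clamp01 := by
  unfold clamp01; fun_prop
lemma clamp01_lip : ∀ s t : ℝ, |clamp01 t - clamp01 s| ≤ |t - s| := by
  intro s t
  unfold clamp01
  refine le_trans (abs_min_sub_min_le_max _ _ _ _) ?_
  simp only [sub_self, abs_zero]
  exact max_le (abs_max_sub_max_le_abs _ _ _) (abs_nonneg _)
lemma clamp01_nonneg (t : ℝ) : 0 ≤ clamp01 t := le_min (le_max_right _ _) zero_le_one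
lemma clamp01_le_one (t : ℝ) : clamp01 t ≤ 1 := min_le_right _ _
lemma clamp01_of_one_le {t : ℝ} (h : 1 ≤ t) : clamp01 t = 1 := by
  unfold clamp01
  rw [max_eq_left (le_trans zero_le_one h), min_eq_right h]
lemma clamp01_of_nonpos {t : ℝ} (h : t ≤ 0) : clamp01 t = 0 := by
  unfold clamp01
  rw [max_eq_right h, min_eq_left zero_le_one]

/-- 1/max(t,1) - 1 -/
noncomputable def recipm (t : ℝ) : ℝ := (max t 1)⁻¹ - 1

lemma recipm_zero : recipm 0 = 0 := by simp [recipm]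
lemma recipm_continuous : Continuous recipm := by
  unfold recipm
  have h : ∀ t : ℝ, max t 1 ≠ 0 := fun t => ne_of_gt (lt_of_lt_of_le one_pos (le_max_right _ _))
  exact ((continuous_id.max continuous_const).inv₀ h).sub continuous_const
lemma recipm_lip : ∀ s t : ℝ, |recipm t - recipm s| ≤ |t - s| := by
  intro s t
  have ha : (1:ℝ) ≤ max t 1 := le_max_right _ _
  have hb : (1:ℝ) ≤ max s 1 := le_max_right _ _
  have ha0 : (0:ℝ) < max t 1 := lt_of_lt_of_le one_pos ha
  have hb0 : (0:ℝ) < max s 1 := lt_of_lt_of_le one_pos hb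
  have key : recipm t - recipm s = (max s 1 - max t 1) / (max t 1 * max s 1) := by
    unfold recipm; field_simp; ring
  rw [key, abs_div]
  have h1 : |max s 1 - max t 1| ≤ |t - s| := by
    rw [abs_sub_comm]
    exact abs_max_sub_max_le_abs _ _ _
  have h2 : (1:ℝ) ≤ |max t 1 * max s 1| := by
    rw [abs_of_pos (mul_pos ha0 hb0)]
    nlinarith
  calc |max s 1 - max t 1| / |max t 1 * max s 1|
      ≤ |max s 1 - max t 1| := div_le_self (abs_nonneg _) h2
    _ ≤ |t - s| := h1
lemma recipm_nonpos (t : ℝ) : recipm t ≤ 0 := by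
  unfold recipm
  have : (max t 1)⁻¹ ≤ 1 := by
    rw [inv_le_one_iff₀]; right; exact le_max_right _ _
  linarith
lemma recipm_ge (t : ℝ) : -1 ≤ recipm t := by
  unfold recipm
  have : 0 < (max t 1)⁻¹ := inv_pos.mpr (lt_of_lt_of_le one_pos (le_max_right _ _))
  linarith
lemma recipm_abs_le_one (t : ℝ) : |recipm t| ≤ 1 := by
  rw [abs_le]; exact ⟨recipm_ge t, le_trans (recipm_nonpos t) zero_le_one⟩
lemma recipm_of_one_le {t : ℝ} (h : 1 ≤ t) : recipm t + 1 = t⁻¹ := by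
  unfold recipm; rw [max_eq_left h]; ring

/-- truncated square contraction -/
noncomputable def sqc (M t : ℝ) : ℝ := (min (max t (-M)) M)^2 / (2*M)

lemma sqc_zero {M : ℝ} (hM : 0 < M) : sqc M 0 = 0 := by
  unfold sqc
  rw [max_eq_left (by linarith : -M ≤ (0:ℝ)), min_eq_left (le_of_lt hM)]
  simp
lemma sqc_continuous (M : ℝ) : Continuous (sqc M) := by
  unfold sqc; fun_prop
lemma sqc_lip {M : ℝ} (hM : 0 < M) : ∀ s t : ℝ, |sqc M t - sqc M s| ≤ |t - s| := by
  intro s t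
  set c := min (max t (-M)) M with hc
  set d := min (max s (-M)) M with hd
  have hcM : |c| ≤ M := by
    rw [abs_le]
    exact ⟨le_min (le_max_right _ _) (by linarith), min_le_right _ _⟩
  have hdM : |d| ≤ M := by
    rw [abs_le]
    exact ⟨le_min (le_max_right _ _) (by linarith), min_le_right _ _⟩
  have hcd : |c - d| ≤ |t - s| := by
    refine le_trans (abs_min_sub_min_le_max _ _ _ _) ?_
    simp only [sub_self, abs_zero]
    exact max_le (abs_max_sub_max_le_abs _ _ _) (abs_nonneg _)
  have key : sqc M t - sqc M s = (c - d) * (c + d) / (2*M) := by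
    unfold sqc; rw [← hc, ← hd]; ring
  rw [key, abs_div, abs_mul]
  rw [abs_of_pos (by linarith : (0:ℝ) < 2*M)]
  rw [div_le_iff₀ (by linarith : (0:ℝ) < 2*M)]
  have h1 : |c + d| ≤ 2*M := by
    calc |c + d| ≤ |c| + |d| := abs_add_le _ _
      _ ≤ 2*M := by linarith
  calc |c - d| * |c + d| ≤ |t - s| * (2*M) := by
        apply mul_le_mul hcd h1 (abs_nonneg _) (abs_nonneg _)
  
lemma sqc_eq {M t : ℝ} (hM : 0 < M) (h : |t| ≤ M) : (2*M) * sqc M t = t * t := by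
  unfold sqc
  rw [abs_le] at h
  rw [max_eq_left h.1, min_eq_left h.2]
  field_simp

section EnergyAlgebra

variable {X : Type*} [MetricSpace X] [MeasurableSpace X] {m : Measure X} {p : ℝ}

lemma rpow_p_cancel (hp : 1 < p) {x : ℝ} (hx : 0 ≤ x) : (x ^ (1/p)) ^ p = x := by
  rw [← Real.rpow_mul hx, one_div_mul_cancel (by linarith : p ≠ 0), Real.rpow_one]

lemma PE_zero_mem (PE : PEnergy p m) : (0 : X → ℝ) ∈ PE.F := by
  obtain ⟨g, hg, -⟩ := PE.denseLp 0 MemLp.zero 1 one_pos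
  have h0 : (0 : X → ℝ) = (0:ℝ) • g := by funext x; simp
  rw [h0]
  exact PE.smul_mem 0 g hg

lemma PE_E_zero (PE : PEnergy p m) (hp : 1 < p) : PE.E 0 = 0 := by
  have h0 := PE_zero_mem PE
  have h := PE.norm_smul 0 0 h0
  rw [zero_smul, abs_zero, zero_mul] at h
  have := rpow_p_cancel hp (PE.nonneg 0 h0)
  rw [h, Real.zero_rpow (by linarith : p ≠ 0)] at this
  exact this.symm

lemma PE_E_rpow_nonneg (PE : PEnergy p m) {f : X → ℝ} (hf : f ∈ PE.F) :
    0 ≤ PE.E f ^ (1/p) := Real.rpow_nonneg (PE.nonneg f hf) _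

lemma PE_E_smul (PE : PEnergy p m) (hp : 1 < p) (c : ℝ) {f : X → ℝ} (hf : f ∈ PE.F) :
    PE.E (c • f) = |c| ^ p * PE.E f := by
  have h := PE.norm_smul c f hf
  have h1 : PE.E (c • f) = (PE.E (c • f) ^ (1/p)) ^ p :=
    (rpow_p_cancel hp (PE.nonneg _ (PE.smul_mem c f hf))).symm
  rw [h1, h, Real.mul_rpow (abs_nonneg c) (PE_E_rpow_nonneg PE hf),
    rpow_p_cancel hp (PE.nonneg f hf)]

lemma PE_neg_mem (PE : PEnergy p m) {f : X → ℝ} (hf : f ∈ PE.F) : -f ∈ PE.F := by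
  have : -f = (-1 : ℝ) • f := by funext x; simp
  rw [this]; exact PE.smul_mem _ f hf

lemma PE_E_neg (PE : PEnergy p m) (hp : 1 < p) {f : X → ℝ} (hf : f ∈ PE.F) :
    PE.E (-f) = PE.E f := by
  have : -f = (-1 : ℝ) • f := by funext x; simp
  rw [this, PE_E_smul PE hp _ hf]
  simp

lemma PE_sub_mem (PE : PEnergy p m) {f g : X → ℝ} (hf : f ∈ PE.F) (hg : g ∈ PE.F) :
    f - g ∈ PE.F := by
  have : f - g = f + -g := by funext x; simp [sub_eq_add_neg]
  rw [this]; exact PE.add_mem f hf _ (PE_neg_mem PE hg)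

lemma PE_E_sub_rpow_le (PE : PEnergy p m) (hp : 1 < p) {f g : X → ℝ}
    (hf : f ∈ PE.F) (hg : g ∈ PE.F) :
    PE.E (f - g) ^ (1/p) ≤ PE.E f ^ (1/p) + PE.E g ^ (1/p) := by
  have h1 : f - g = f + -g := by funext x; simp [sub_eq_add_neg]
  rw [h1]
  calc PE.E (f + -g) ^ (1/p) ≤ PE.E f ^ (1/p) + PE.E (-g) ^ (1/p) :=
        PE.norm_triangle f hf _ (PE_neg_mem PE hg)
    _ = PE.E f ^ (1/p) + PE.E g ^ (1/p) := by rw [PE_E_neg PE hp hg]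

lemma PE_contraction (PE : PEnergy p m) (hp : 1 < p) {φ : ℝ → ℝ} (hcont : Continuous φ) (h0 : φ 0 = 0)
    (hlip : ∀ s t : ℝ, |φ t - φ s| ≤ |t - s|) {f : X → ℝ} (hf : f ∈ PE.F) :
    φ ∘ f ∈ PE.F ∧ PE.E (φ ∘ f) ^ (1/p) ≤ PE.E f ^ (1/p) := by
  obtain ⟨h1, h2⟩ := PE.markovian φ hcont h0 hlip f hf
  exact ⟨h1, Real.rpow_le_rpow (PE.nonneg _ h1) h2 (div_nonneg zero_le_one (by linarith))⟩

lemma PE_sum_mem (PE : PEnergy p m) (hp : 1 < p) {ι : Type*} (s : Finset ι)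
    (f : ι → X → ℝ) (h : ∀ i ∈ s, f i ∈ PE.F) :
    (∑ i ∈ s, f i) ∈ PE.F ∧
      PE.E (∑ i ∈ s, f i) ^ (1/p) ≤ ∑ i ∈ s, PE.E (f i) ^ (1/p) := by
  classical
  induction s using Finset.cons_induction with
  | empty =>
    simp only [Finset.sum_empty]
    exact ⟨PE_zero_mem PE, by
      rw [PE_E_zero PE hp, Real.zero_rpow (one_div_ne_zero (by linarith : p ≠ 0))]⟩
  | cons a s ha ih =>
    obtain ⟨m1, e1⟩ := ih (fun i hi => h i (Finset.mem_cons_of_mem hi))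
    have hfa := h a (Finset.mem_cons_self a s)
    rw [Finset.sum_cons, Finset.sum_cons]
    refine ⟨PE.add_mem _ hfa _ m1, ?_⟩
    calc PE.E (f a + ∑ i ∈ s, f i) ^ (1/p)
        ≤ PE.E (f a) ^ (1/p) + PE.E (∑ i ∈ s, f i) ^ (1/p) :=
          PE.norm_triangle _ hfa _ m1
      _ ≤ PE.E (f a) ^ (1/p) + ∑ i ∈ s, PE.E (f i) ^ (1/p) := by linarith

lemma PE_sq_mem (PE : PEnergy p m) (hp : 1 < p) {M : ℝ} (hM : 0 < M) {f : X → ℝ}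
    (hf : f ∈ PE.F) (hb : ∀ x, |f x| ≤ M) :
    f * f ∈ PE.F ∧ PE.E (f * f) ^ (1/p) ≤ (2*M) * PE.E f ^ (1/p) := by
  obtain ⟨hm, he⟩ := PE_contraction PE hp (sqc_continuous M) (sqc_zero hM) (sqc_lip hM) hf
  have key : f * f = (2*M) • (sqc M ∘ f) := by
    funext x
    simp only [Pi.mul_apply, Pi.smul_apply, Function.comp_apply, smul_eq_mul]
    exact (sqc_eq hM (hb x)).symm
  rw [key]
  refine ⟨PE.smul_mem _ _ hm, ?_⟩
  rw [PE.norm_smul _ _ hm, abs_of_pos (by linarith : (0:ℝ) < 2*M)]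
  exact mul_le_mul_of_nonneg_left he (by linarith)

lemma PE_mul_mem (PE : PEnergy p m) (hp : 1 < p) {f g : X → ℝ}
    (hf : f ∈ PE.F) (hg : g ∈ PE.F) (hbf : ∀ x, |f x| ≤ 1) (hbg : ∀ x, |g x| ≤ 1) :
    f * g ∈ PE.F ∧ PE.E (f * g) ^ (1/p) ≤ 3 * (PE.E f ^ (1/p) + PE.E g ^ (1/p)) := by
  have hfg : f + g ∈ PE.F := PE.add_mem f hf g hg
  have hbfg : ∀ x, |(f + g) x| ≤ 2 := by
    intro x
    calc |(f + g) x| = |f x + g x| := rfl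
      _ ≤ |f x| + |g x| := abs_add_le _ _
      _ ≤ 2 := by linarith [hbf x, hbg x]
  obtain ⟨hA, eA⟩ := PE_sq_mem PE hp (by norm_num : (0:ℝ) < 2) hfg hbfg
  obtain ⟨hB, eB⟩ := PE_sq_mem PE hp one_pos hf hbf
  obtain ⟨hC, eC⟩ := PE_sq_mem PE hp one_pos hg hbg
  have key : f * g = (1/2 : ℝ) • ((f + g) * (f + g) - f * f - g * g) := by
    funext x
    simp only [Pi.mul_apply, Pi.smul_apply, Pi.sub_apply, Pi.add_apply, smul_eq_mul]
    ring
  have hmem1 : (f + g) * (f + g) - f * f ∈ PE.F := PE_sub_mem PE hA hB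
  have hmem2 : (f + g) * (f + g) - f * f - g * g ∈ PE.F := PE_sub_mem PE hmem1 hC
  rw [key]
  refine ⟨PE.smul_mem _ _ hmem2, ?_⟩
  rw [PE.norm_smul _ _ hmem2]
  have t1 : PE.E ((f + g) * (f + g) - f * f) ^ (1/p)
      ≤ PE.E ((f + g) * (f + g)) ^ (1/p) + PE.E (f * f) ^ (1/p) :=
    PE_E_sub_rpow_le PE hp hA hB
  have t2 : PE.E ((f + g) * (f + g) - f * f - g * g) ^ (1/p)
      ≤ PE.E ((f + g) * (f + g) - f * f) ^ (1/p) + PE.E (g * g) ^ (1/p) :=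
    PE_E_sub_rpow_le PE hp hmem1 hC
  have efg : PE.E (f + g) ^ (1/p) ≤ PE.E f ^ (1/p) + PE.E g ^ (1/p) :=
    PE.norm_triangle f hf g hg
  have habs : |(1:ℝ)/2| = 1/2 := by norm_num
  rw [habs]
  nlinarith [PE_E_rpow_nonneg PE hf, PE_E_rpow_nonneg PE hg]

end EnergyAlgebra

section Counting

variable {X : Type*} [MetricSpace X] [MeasurableSpace X] [BorelSpace X]
variable {m : Measure X} {CVD : ℝ}

lemma vd_iter
    (hVD : ∀ (x : X) (r : ℝ), 0 < r → m (ball x (2*r)) ≤ ENNReal.ofReal CVD * m (ball x r))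
    (x : X) {r : ℝ} (hr : 0 < r) (n : ℕ) :
    m (ball x (2^n * r)) ≤ (ENNReal.ofReal CVD)^n * m (ball x r) := by
  induction n with
  | zero => simp
  | succ k ih =>
    have h2 : (2:ℝ)^(k+1) * r = 2 * (2^k * r) := by ring
    rw [h2]
    calc m (ball x (2 * (2^k * r))) ≤ ENNReal.ofReal CVD * m (ball x (2^k*r)) :=
          hVD x _ (by positivity)
      _ ≤ ENNReal.ofReal CVD * ((ENNReal.ofReal CVD)^k * m (ball x r)) :=
          mul_le_mul_right ih _
      _ = (ENNReal.ofReal CVD)^(k+1) * m (ball x r) := by ring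

lemma vd_mono_radius
    (hVD : ∀ (x : X) (r : ℝ), 0 < r → m (ball x (2*r)) ≤ ENNReal.ofReal CVD * m (ball x r))
    (x : X) {r R : ℝ} (hr : 0 < r) {n : ℕ} (hn : R ≤ 2^n * r) :
    m (ball x R) ≤ (ENNReal.ofReal CVD)^n * m (ball x r) :=
  (measure_mono (ball_subset_ball hn)).trans (vd_iter hVD x hr n)

lemma ball_lt_top [LocallyCompactSpace X] [m.Regular]
    (hVD : ∀ (x : X) (r : ℝ), 0 < r → m (ball x (2*r)) ≤ ENNReal.ofReal CVD * m (ball x r))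
    (x : X) (r : ℝ) : m (ball x r) < ⊤ := by
  obtain ⟨K, hKc, hK⟩ := exists_compact_mem_nhds x
  obtain ⟨r₀, hr₀, hball⟩ := Metric.mem_nhds_iff.mp hK
  obtain ⟨n, hn⟩ := pow_unbounded_of_one_lt (r / r₀) (one_lt_two (α := ℝ))
  have hrn : r ≤ 2^n * r₀ := by
    rw [div_lt_iff₀ hr₀] at hn
    linarith
  calc m (ball x r) ≤ (ENNReal.ofReal CVD)^n * m (ball x r₀) := vd_mono_radius hVD x hr₀ hrn
    _ ≤ (ENNReal.ofReal CVD)^n * m K := mul_le_mul_right (measure_mono hball) _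
    _ < ⊤ := ENNReal.mul_lt_top (ENNReal.pow_ne_top ENNReal.ofReal_ne_top).lt_top
        hKc.measure_lt_top

lemma count_sep [m.IsOpenPosMeasure] [LocallyCompactSpace X] [m.Regular]
    (hCVD : 0 < CVD)
    (hVD : ∀ (x : X) (r : ℝ), 0 < r → m (ball x (2*r)) ≤ ENNReal.ofReal CVD * m (ball x r))
    (x : X) {R δ : ℝ} (hR : 0 < R) (hδ : 0 < δ) {n : ℕ}
    (hn : 2*R + δ/2 ≤ 2^n * (δ/2))
    (T : Finset X) (hT : ↑T ⊆ ball x R)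
    (hsep : (T : Set X).Pairwise fun a b => δ ≤ dist a b) :
    (T.card : ℝ) ≤ CVD ^ n := by
  classical
  set C : ℝ≥0∞ := (ENNReal.ofReal CVD)^n with hC
  set A : ℝ≥0∞ := m (ball x (R + δ/2)) with hA
  have hA0 : A ≠ 0 := (measure_ball_pos m x (by linarith)).ne'
  have hAt : A ≠ ⊤ := (ball_lt_top hVD x _).ne
  have step1 : ∀ s ∈ T, A ≤ C * m (ball s (δ/2)) := by
    intro s hs
    have hsub : ball x (R + δ/2) ⊆ ball s (2^n * (δ/2)) := by
      intro z hz
      rw [mem_ball] at hz ⊢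
      have hds : dist s x < R := hT hs
      calc dist z s ≤ dist z x + dist x s := dist_triangle z x s
        _ < R + δ/2 + R := by rw [dist_comm x s]; linarith
        _ ≤ 2^n * (δ/2) := by linarith
    calc A ≤ m (ball s (2^n * (δ/2))) := measure_mono hsub
      _ ≤ C * m (ball s (δ/2)) := vd_iter hVD s (by linarith) n
  have hdisj : (T : Set X).PairwiseDisjoint fun s => ball s (δ/2) := by
    intro a ha b hb hab
    apply Set.disjoint_left.mpr
    intro z hza hzb
    rw [mem_ball] at hza hzb
    have := hsep ha hb hab
    have : dist a b ≤ dist a z + dist z b := dist_triangle a z b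
    rw [dist_comm a z] at this
    linarith [hsep ha hb hab]
  have step3 : ∑ s ∈ T, m (ball s (δ/2)) ≤ A := by
    rw [← measure_biUnion_finset hdisj (fun s _ => measurableSet_ball)]
    apply measure_mono
    intro z hz
    simp only [Set.mem_iUnion] at hz
    obtain ⟨s, hs, hzs⟩ := hz
    rw [mem_ball] at hzs ⊢
    have hds : dist s x < R := hT hs
    calc dist z x ≤ dist z s + dist s x := dist_triangle z s x
      _ < R + δ/2 := by linarith
  have step4 : (T.card : ℝ≥0∞) * A ≤ C * A := by
    calc (T.card : ℝ≥0∞) * A = ∑ _s ∈ T, A := by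
          rw [Finset.sum_const, nsmul_eq_mul]
      _ ≤ ∑ s ∈ T, C * m (ball s (δ/2)) := Finset.sum_le_sum step1
      _ = C * ∑ s ∈ T, m (ball s (δ/2)) := by rw [Finset.mul_sum]
      _ ≤ C * A := mul_le_mul_right step3 _
  have step5 : (T.card : ℝ≥0∞) ≤ C := (ENNReal.mul_le_mul_iff_left hA0 hAt).mp step4
  have hCeq : C = ENNReal.ofReal (CVD ^ n) := by
    rw [hC, ENNReal.ofReal_pow hCVD.le]
  rw [hCeq] at step5
  have := ENNReal.toReal_mono ENNReal.ofReal_ne_top step5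
  rw [ENNReal.toReal_ofReal (by positivity), ENNReal.toReal_natCast] at this
  exact this

lemma sep_finite [m.IsOpenPosMeasure] [LocallyCompactSpace X] [m.Regular]
    (hCVD : 0 < CVD)
    (hVD : ∀ (x : X) (r : ℝ), 0 < r → m (ball x (2*r)) ≤ ENNReal.ofReal CVD * m (ball x r))
    (x : X) {R δ : ℝ} (hR : 0 < R) (hδ : 0 < δ) {n : ℕ}
    (hn : 2*R + δ/2 ≤ 2^n * (δ/2))
    (S : Set X) (hS : S ⊆ ball x R)
    (hsep : S.Pairwise fun a b => δ ≤ dist a b) : S.Finite := by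
  by_contra h
  obtain ⟨T, hTS, hcard⟩ := (Set.Infinite.exists_subset_card_eq h)
    (Nat.floor (CVD^n) + 1)
  have hb := count_sep hCVD hVD x hR hδ hn T (fun z hz => hS (hTS hz))
    (hsep.mono hTS)
  rw [hcard] at hb
  have h2 : (CVD^n : ℝ) < (Nat.floor (CVD^n) : ℝ) + 1 := Nat.lt_floor_add_one _
  push_cast at hb
  linarith

lemma exists_maximal_sep [m.IsOpenPosMeasure] [LocallyCompactSpace X] [m.Regular]
    (hCVD : 0 < CVD)
    (hVD : ∀ (x : X) (r : ℝ), 0 < r → m (ball x (2*r)) ≤ ENNReal.ofReal CVD * m (ball x r))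
    (x : X) {R δ : ℝ} (hR : 0 < R) (hδ : 0 < δ) {n : ℕ}
    (hn : 2*R + δ/2 ≤ 2^n * (δ/2)) :
    ∃ T : Finset X, ↑T ⊆ ball x R ∧ ((T : Set X).Pairwise fun a b => δ ≤ dist a b) ∧
      ∀ y ∈ ball x R, ∃ t ∈ T, dist y t < δ := by
  classical
  set N := Nat.floor (CVD ^ n) with hN
  set P : ℕ → Prop := fun k => ∃ T : Finset X, ↑T ⊆ ball x R ∧
    ((T : Set X).Pairwise fun a b => δ ≤ dist a b) ∧ T.card = k with hP
  have hP0 : P 0 := ⟨∅, by simp, by simp, rfl⟩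
  have hbound : ∀ k, P k → k ≤ N := by
    rintro k ⟨T, h1, h2, h3⟩
    have := count_sep hCVD hVD x hR hδ hn T h1 h2
    rw [h3] at this
    exact Nat.le_floor this
  have hPn : P (Nat.findGreatest P N) := Nat.findGreatest_spec (Nat.zero_le N) hP0
  obtain ⟨T, hT1, hT2, hT3⟩ := hPn
  refine ⟨T, hT1, hT2, ?_⟩
  intro y hy
  by_contra hcon
  push_neg at hcon
  have hyT : y ∉ T := by
    intro hyT
    have := hcon y hyT
    rw [dist_self] at this
    exact absurd this (not_le.mpr hδ)
  have hTins : ((insert y T : Finset X) : Set X).Pairwise fun a b => δ ≤ dist a b := by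
    rw [Finset.coe_insert]
    rw [Set.pairwise_insert]
    refine ⟨hT2, fun b hb _ => ⟨hcon b hb, by rw [dist_comm]; exact hcon b hb⟩⟩
  have hPk : P (T.card + 1) :=
    ⟨insert y T, by rw [Finset.coe_insert]; exact Set.insert_subset_iff.mpr ⟨hy, hT1⟩,
      hTins, Finset.card_insert_of_notMem hyT⟩
  have h1 : T.card + 1 ≤ N := hbound _ hPk
  have h2 : T.card + 1 ≤ Nat.findGreatest P N := Nat.le_findGreatest h1 hPk
  omega

end Counting

section Cutoffs

variable {X : Type*} [MetricSpace X] [MeasurableSpace X] [BorelSpace X]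
  [LocallyCompactSpace X]
variable {m : Measure X} [m.Regular] [m.IsOpenPosMeasure]
variable {p CVD Ccap Acap CΨ : ℝ} {Ψ : ℝ → ℝ}

lemma psi_mono {Ψ : ℝ → ℝ} {CΨ : ℝ} (hΨ : DoublingFn Ψ CΨ) {a b : ℝ}
    (ha : 0 ≤ a) (hab : a ≤ b) : Ψ a ≤ Ψ b :=
  hΨ.strictMonoOn.monotoneOn ha (le_trans ha hab) hab

lemma psi_iter (hΨ : DoublingFn Ψ CΨ) {s : ℝ} (hs : 0 < s) (k : ℕ) :
    Ψ (2^k * s) ≤ CΨ^k * Ψ s := by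
  induction k with
  | zero => simp
  | succ j ih =>
    have h2 : (2:ℝ)^(j+1) * s = 2 * (2^j * s) := by ring
    rw [h2]
    calc Ψ (2 * (2^j * s)) ≤ CΨ * Ψ (2^j * s) := hΨ.doubling _ (by positivity)
      _ ≤ CΨ * (CΨ^j * Ψ s) := by
          have hCΨ : (0:ℝ) < CΨ := lt_trans one_pos hΨ.one_lt
          exact mul_le_mul_of_nonneg_left ih hCΨ.le
      _ = CΨ^(j+1) * Ψ s := by ring

lemma basic_cutoff (hp : 1 < p) (PE : PEnergy p m)
    (hΨ : DoublingFn Ψ CΨ)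
    (hVD : ∀ (x : X) (r : ℝ), 0 < r → m (ball x (2*r)) ≤ ENNReal.ofReal CVD * m (ball x r))
    (hCcap : 0 < Ccap)
    (hcap : ∀ (x : X) (r : ℝ), 0 < r →
      capBetween p m PE (ball x r) (ball x (Acap * r))ᶜ
        ≤ ENNReal.ofReal Ccap * m (ball x r) / ENNReal.ofReal (Ψ r))
    (x : X) {r : ℝ} (hr : 0 < r) :
    ∃ φ : X → ℝ, φ ∈ PE.F ∧ (∀ y, 0 ≤ φ y ∧ φ y ≤ 1) ∧
      (∀ y ∈ ball x r, φ y = 1) ∧ (∀ y, y ∉ ball x (Acap * r) → φ y = 0) ∧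
      PE.E φ ≤ 2 * (Ccap * (m (ball x r)).toReal / Ψ r) := by
  have hΨr : 0 < Ψ r := hΨ.pos r hr
  set B : ℝ≥0∞ := ENNReal.ofReal Ccap * m (ball x r) / ENNReal.ofReal (Ψ r) with hB
  have hnum0 : ENNReal.ofReal Ccap * m (ball x r) ≠ 0 :=
    mul_ne_zero (ENNReal.ofReal_pos.mpr hCcap).ne' (measure_ball_pos m x hr).ne'
  have hnumt : ENNReal.ofReal Ccap * m (ball x r) ≠ ⊤ :=
    ENNReal.mul_ne_top ENNReal.ofReal_ne_top (ball_lt_top hVD x r).ne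
  have hB0 : B ≠ 0 := by
    rw [hB]
    exact (ENNReal.div_pos hnum0 ENNReal.ofReal_ne_top).ne'
  have hBt : B ≠ ⊤ := by
    rw [hB]
    exact (ENNReal.div_lt_top hnumt (ENNReal.ofReal_pos.mpr hΨr).ne').ne
  have hlt : capBetween p m PE (ball x r) (ball x (Acap * r))ᶜ < B + B :=
    lt_of_le_of_lt (hcap x r hr) (ENNReal.lt_add_right hBt hB0)
  rw [capBetween] at hlt
  obtain ⟨a, ha, halt⟩ := sInf_lt_iff.mp hlt
  obtain ⟨φ, ⟨hφF, ⟨U, hUo, hUs, hU1⟩, ⟨W, hWo, hWs, hW0⟩⟩, rfl⟩ := ha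
  obtain ⟨hξF, hξE⟩ := PE.markovian clamp01 clamp01_continuous clamp01_zero
    (fun s t => clamp01_lip s t) φ hφF
  refine ⟨clamp01 ∘ φ, hξF, ?_, ?_, ?_, ?_⟩
  · exact fun y => ⟨clamp01_nonneg _, clamp01_le_one _⟩
  · intro y hy
    have : φ y = 1 := hU1 y (hUs hy)
    simp only [Function.comp_apply, this]
    exact clamp01_of_one_le le_rfl
  · intro y hy
    have : φ y = 0 := hW0 y (hWs hy)
    simp only [Function.comp_apply, this, clamp01_zero]
  · have h1 : PE.E φ ≤ (B + B).toReal := by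
      have := ENNReal.toReal_mono (by finiteness) halt.le
      rwa [ENNReal.toReal_ofReal (PE.nonneg φ hφF)] at this
    have h2 : (B + B).toReal = 2 * (Ccap * (m (ball x r)).toReal / Ψ r) := by
      rw [ENNReal.toReal_add hBt hBt, hB, ENNReal.toReal_div, ENNReal.toReal_mul,
        ENNReal.toReal_ofReal hCcap.le, ENNReal.toReal_ofReal hΨr.le]
      ring
    calc PE.E (clamp01 ∘ φ) ≤ PE.E φ := hξE
      _ ≤ 2 * (Ccap * (m (ball x r)).toReal / Ψ r) := by rw [← h2]; exact h1

lemma ratio_cutoff (hp : 1 < p) (PE : PEnergy p m)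
    (hΨ : DoublingFn Ψ CΨ)
    (hCVD : 0 < CVD)
    (hVD : ∀ (x : X) (r : ℝ), 0 < r → m (ball x (2*r)) ≤ ENNReal.ofReal CVD * m (ball x r))
    (hCcap : 0 < Ccap) (hAcap : 1 < Acap)
    (hcap : ∀ (x : X) (r : ℝ), 0 < r →
      capBetween p m PE (ball x r) (ball x (Acap * r))ᶜ
        ≤ ENNReal.ofReal Ccap * m (ball x r) / ENNReal.ofReal (Ψ r))
    {k n₂ : ℕ} (hk : 8 * (1 + Acap) ≤ 2^k) (hn₂ : 32 * (1 + Acap) + 1 ≤ 2^n₂)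
    (x : X) {r : ℝ} (hr : 0 < r) :
    ∃ φ : X → ℝ, φ ∈ PE.F ∧ (∀ y, 0 ≤ φ y ∧ φ y ≤ 1) ∧
      (∀ y ∈ ball x r, φ y = 1) ∧ (∀ y, y ∉ ball x (9*r/8) → φ y = 0) ∧
      PE.E φ ≤ ((CVD^n₂) ^ p * (CΨ^k * (2 * Ccap * CVD))) *
        (m (ball x r)).toReal / Ψ r := by
  have hA0 : (0:ℝ) < 1 + Acap := by linarith
  set s : ℝ := r / (8 * (1 + Acap)) with hs_def
  have hs : 0 < s := by positivity
  have hsr : s ≤ r := by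
    rw [hs_def, div_le_iff₀ (by positivity)]
    nlinarith
  have hrs : r = 8 * (1 + Acap) * s := by
    rw [hs_def]; field_simp
  -- counting inequality for maximal separated set
  have hcnt : 2*r + s/2 ≤ 2^n₂ * (s/2) := by
    rw [hrs]
    have : (0:ℝ) < s/2 := by linarith
    nlinarith
  obtain ⟨T, hT1, hT2, hT3⟩ := exists_maximal_sep hCVD hVD x hr hs hcnt
  -- basic cutoffs at each point of T
  have hbc : ∀ t : X, t ∈ T → ∃ φ : X → ℝ, φ ∈ PE.F ∧ (∀ y, 0 ≤ φ y ∧ φ y ≤ 1) ∧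
      (∀ y ∈ ball t s, φ y = 1) ∧ (∀ y, y ∉ ball t (Acap * s) → φ y = 0) ∧
      PE.E φ ≤ 2 * (Ccap * (m (ball t s)).toReal / Ψ s) :=
    fun t _ => basic_cutoff hp PE hΨ hVD hCcap hcap t hs
  choose Φ hΦF hΦb hΦ1 hΦ0 hΦE using hbc
  classical
  set g : X → ℝ := ∑ t ∈ T.attach, Φ t.1 t.2 with hg
  obtain ⟨hgF, hgE⟩ := PE_sum_mem PE hp T.attach (fun t => Φ t.1 t.2) (fun t _ => hΦF t.1 t.2)
  rw [← hg] at hgF hgE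
  obtain ⟨hmemc, hEc⟩ := PE.markovian clamp01 clamp01_continuous clamp01_zero
    (fun a b => clamp01_lip a b) g hgF
  have hΨr : 0 < Ψ r := hΨ.pos r hr
  have hΨs : 0 < Ψ s := hΨ.pos s hs
  refine ⟨clamp01 ∘ g, hmemc, fun y => ⟨clamp01_nonneg _, clamp01_le_one _⟩, ?_, ?_, ?_⟩
  · intro y hy
    obtain ⟨t, htT, hyt⟩ := hT3 y hy
    have h1 : Φ t htT y = 1 := hΦ1 t htT y (mem_ball.mpr hyt)
    have hsum : 1 ≤ g y := by
      have hle := Finset.single_le_sum (f := fun (t' : {a // a ∈ T}) => Φ t'.1 t'.2 y)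
        (fun i _ => (hΦb i.1 i.2 y).1) (Finset.mem_attach T ⟨t, htT⟩)
      simp only [hg, Finset.sum_apply]
      simpa [h1] using hle
    simp only [Function.comp_apply]
    exact clamp01_of_one_le hsum
  · intro y hy
    have heach : ∀ t' : {a // a ∈ T}, Φ t'.1 t'.2 y = 0 := by
      rintro ⟨t, ht⟩
      apply hΦ0
      intro hmem
      rw [mem_ball] at hmem
      have hdtx : dist t x < r := hT1 ht
      have hdyx : ¬ dist y x < 9*r/8 := fun hc => hy (mem_ball.mpr hc)
      push_neg at hdyx
      have htri : dist y x ≤ dist y t + dist t x := dist_triangle y t x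
      have hAs : Acap * s ≤ r/8 := by
        rw [hrs]; nlinarith
      linarith
    have hgy : g y = 0 := by
      rw [hg, Finset.sum_apply]
      exact Finset.sum_eq_zero (fun i _ => heach i)
    simp only [Function.comp_apply, hgy, clamp01_zero]
  · -- energy bound
    set v : ℝ := (m (ball x r)).toReal with hv
    have hv0 : 0 ≤ v := ENNReal.toReal_nonneg
    set M₂ : ℝ := (m (ball x (2*r))).toReal with hM₂def
    have hM₂v : M₂ ≤ CVD * v := by
      have h := hVD x r hr
      have := ENNReal.toReal_mono
        (ENNReal.mul_ne_top ENNReal.ofReal_ne_top (ball_lt_top hVD x r).ne) h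
      rwa [ENNReal.toReal_mul, ENNReal.toReal_ofReal hCVD.le] at this
    have hM₂0 : 0 ≤ M₂ := ENNReal.toReal_nonneg
    set D : ℝ := 2 * (Ccap * M₂) / Ψ s with hD
    have hD0 : 0 ≤ D := by positivity
    have hDt : ∀ t' : {a // a ∈ T}, PE.E (Φ t'.1 t'.2) ≤ D := by
      rintro ⟨t, ht⟩
      refine le_trans (hΦE t ht) ?_
      have hsub : ball t s ⊆ ball x (2*r) := by
        intro z hz
        rw [mem_ball] at hz ⊢
        have : dist t x < r := hT1 ht
        calc dist z x ≤ dist z t + dist t x := dist_triangle z t x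
          _ < s + r := by linarith
          _ ≤ 2*r := by linarith
      have hmts : (m (ball t s)).toReal ≤ M₂ :=
        ENNReal.toReal_mono (ball_lt_top hVD x (2*r)).ne (measure_mono hsub)
      have hrw : 2 * (Ccap * (m (ball t s)).toReal / Ψ s)
          = 2 * (Ccap * (m (ball t s)).toReal) / Ψ s := by ring
      rw [hD, hrw, div_le_div_iff₀ hΨs hΨs]
      nlinarith [mul_le_mul_of_nonneg_right
        (mul_le_mul_of_nonneg_left hmts hCcap.le) hΨs.le]
    have hTcard : (T.card : ℝ) ≤ CVD ^ n₂ := count_sep hCVD hVD x hr hs hcnt T hT1 hT2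
    have hgE2 : PE.E g ^ (1/p) ≤ (CVD ^ n₂) * D ^ (1/p) := by
      refine le_trans hgE ?_
      calc ∑ t ∈ T.attach, PE.E (Φ t.1 t.2) ^ (1/p)
          ≤ ∑ _t ∈ T.attach, D ^ (1/p) := by
            refine Finset.sum_le_sum (fun i _ => ?_)
            exact Real.rpow_le_rpow (PE.nonneg _ (hΦF i.1 i.2)) (hDt i)
              (div_nonneg zero_le_one (by linarith))
        _ = (T.card : ℝ) * D ^ (1/p) := by
            rw [Finset.sum_const, Finset.card_attach, nsmul_eq_mul]
        _ ≤ (CVD ^ n₂) * D ^ (1/p) :=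
            mul_le_mul_of_nonneg_right hTcard (Real.rpow_nonneg hD0 _)
    have hEgD : PE.E g ≤ (CVD ^ n₂) ^ p * D := by
      have h1 : PE.E g = (PE.E g ^ (1/p)) ^ p := (rpow_p_cancel hp (PE.nonneg g hgF)).symm
      rw [h1]
      calc (PE.E g ^ (1/p)) ^ p ≤ ((CVD ^ n₂) * D ^ (1/p)) ^ p :=
            Real.rpow_le_rpow (Real.rpow_nonneg (PE.nonneg g hgF) _) hgE2 (by linarith)
        _ = (CVD ^ n₂) ^ p * (D ^ (1/p)) ^ p :=
            Real.mul_rpow (by positivity) (Real.rpow_nonneg hD0 _)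
        _ = (CVD ^ n₂) ^ p * D := by rw [rpow_p_cancel hp hD0]
    have hΨsr : Ψ r ≤ CΨ^k * Ψ s := by
      refine le_trans (psi_mono hΨ hr.le ?_) (psi_iter hΨ hs k)
      rw [hrs]
      nlinarith
    have hDle : D ≤ CΨ^k * (2 * Ccap * CVD) * v / Ψ r := by
      rw [hD, div_le_div_iff₀ hΨs hΨr]
      have hCΨk : (0:ℝ) < CΨ^k := pow_pos (lt_trans one_pos hΨ.one_lt) k
      calc 2 * (Ccap * M₂) * Ψ r ≤ 2 * (Ccap * M₂) * (CΨ^k * Ψ s) :=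
            mul_le_mul_of_nonneg_left hΨsr (by positivity)
        _ = (CΨ^k * (2 * Ccap * M₂)) * Ψ s := by ring
        _ ≤ (CΨ^k * (2 * Ccap * (CVD * v))) * Ψ s := by
            have h2 : 2 * Ccap * M₂ ≤ 2 * Ccap * (CVD * v) :=
              mul_le_mul_of_nonneg_left hM₂v (by positivity)
            nlinarith
        _ = CΨ^k * (2 * Ccap * CVD) * v * Ψ s := by ring
    calc PE.E (clamp01 ∘ g) ≤ PE.E g := hEc
      _ ≤ (CVD ^ n₂) ^ p * D := hEgD
      _ ≤ (CVD ^ n₂) ^ p * (CΨ^k * (2 * Ccap * CVD) * v / Ψ r) :=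
          mul_le_mul_of_nonneg_left hDle (Real.rpow_nonneg (by positivity) _)
      _ = ((CVD^n₂) ^ p * (CΨ^k * (2 * Ccap * CVD))) * v / Ψ r := by ring

end Cutoffs
set_option maxHeartbeats 3200000 in
theorem statement_6 {X : Type*} [MetricSpace X] [LocallyCompactSpace X]
    [TopologicalSpace.SeparableSpace X] [MeasurableSpace X] [BorelSpace X]
    (m : Measure X) [m.Regular] [m.IsOpenPosMeasure]
    (p : ℝ) (hp : 1 < p) (PE : PEnergy p m) (GM : PEnergyMeasure p m PE)
    (Ψ : ℝ → ℝ) (CΨ : ℝ) (hΨ : DoublingFn Ψ CΨ)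
    (CVD : ℝ) (hCVD : 0 < CVD)
    (hVD : ∀ (x : X) (r : ℝ), 0 < r →
      m (ball x (2 * r)) ≤ ENNReal.ofReal CVD * m (ball x r))
    (Ccap Acap : ℝ) (hCcap : 0 < Ccap) (hAcap : 1 < Acap)
    (hcap : ∀ (x : X) (r : ℝ), 0 < r →
      capBetween p m PE (ball x r) (ball x (Acap * r))ᶜ
        ≤ ENNReal.ofReal Ccap * m (ball x r) / ENNReal.ofReal (Ψ r)) :
    ∃ Ccut : ℝ, 0 < Ccut ∧ ∀ ε : ℝ, 0 < ε →
      ENNReal.ofReal ε < EMetric.diam (Set.univ : Set X) →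
      ∀ V : Set X, IsNet ε V → ∃ ψ : X → X → ℝ,
        (∀ z ∈ V, ψ z ∈ PE.F ∧
          (∀ y, 0 ≤ ψ z y ∧ ψ z y ≤ 1) ∧
          (∀ y ∈ ball z (ε / 4), ψ z y = 1) ∧
          (∀ y ∉ ball z (5 * ε / 4), ψ z y = 0) ∧
          ENNReal.ofReal (PE.E (ψ z)) ≤
            ENNReal.ofReal Ccut * m (ball z ε) / ENNReal.ofReal (Ψ ε)) ∧
        ∀ y : X, ∑' z : V, ψ (z : X) y = 1 := by  classical
  obtain ⟨k, hkx⟩ := pow_unbounded_of_one_lt (8 * (1 + Acap)) (one_lt_two (α := ℝ))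
  obtain ⟨n₂, hn₂x⟩ := pow_unbounded_of_one_lt (32 * (1 + Acap) + 1) (one_lt_two (α := ℝ))
  have hk' : 8 * (1 + Acap) ≤ 2^k := hkx.le
  have hn₂' : 32 * (1 + Acap) + 1 ≤ 2^n₂ := hn₂x.le
  have hCΨ : (1:ℝ) < CΨ := hΨ.one_lt
  have hCΨ0 : (0:ℝ) < CΨ := lt_trans one_pos hCΨ
  set C₀ : ℝ := (CVD^n₂)^p * (CΨ^k * (2*Ccap*CVD)) with hC₀
  set C₂ : ℝ := C₀ * CΨ^2 * CVD^2 with hC₂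
  set K : ℝ := 17 + 15 * CVD^4 with hK
  have hC₀pos : 0 < C₀ := by
    rw [hC₀]
    have h1 : 0 < (CVD^n₂ : ℝ)^p := Real.rpow_pos_of_pos (pow_pos hCVD n₂) p
    positivity
  have hC₂pos : 0 < C₂ := by
    rw [hC₂]; positivity
  have hKpos : 0 < K := by rw [hK]; positivity
  refine ⟨K^p * C₂, mul_pos (Real.rpow_pos_of_pos hKpos p) hC₂pos, ?_⟩
  intro ε hε hdiam V hV
  obtain ⟨hVsep, hVcov⟩ := hV
  have hε4 : 0 < ε/4 := by linarith
  have hΨε : 0 < Ψ ε := hΨ.pos ε hε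
  have hΨ4 : 0 < Ψ (ε/4) := hΨ.pos _ hε4
  have hX : Nonempty X := by
    by_contra hne
    rw [not_nonempty_iff] at hne
    have h0 : (Set.univ : Set X) = ∅ := Set.univ_eq_empty_iff.mpr hne
    rw [h0] at hdiam
    exact not_lt_zero' (hdiam.trans_eq (Metric.ediam_empty : Metric.ediam (∅ : Set X) = 0))
  have hballs : ∀ (z : X) (r : ℝ), m (ball z r) ≠ ⊤ := fun z r => (ball_lt_top hVD z r).ne
  have hCVD1 : (1:ℝ) ≤ CVD := by
    obtain ⟨x⟩ := hX
    by_contra hcon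
    push_neg at hcon
    have h1 : m (ball x 1) ≤ m (ball x (2*1)) :=
      measure_mono (ball_subset_ball (by norm_num))
    have h2 := (h1.trans (hVD x 1 one_pos))
    have h3 : ENNReal.ofReal CVD * m (ball x 1) < 1 * m (ball x 1) := by
      rw [ENNReal.mul_lt_mul_iff_left (measure_ball_pos m x one_pos).ne' (hballs x 1)]
      exact ENNReal.ofReal_lt_one.mpr hcon
    rw [one_mul] at h3
    exact absurd (h2.trans_lt h3) (lt_irrefl _)
  have hdivle : ∀ a b c : ℝ, a ≤ b → 0 < c → a / c ≤ b / c := by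
    intro a b c hab hc
    rw [div_le_div_iff₀ hc hc]
    exact mul_le_mul_of_nonneg_right hab hc.le
  -- the cutoff provider
  have hcut : ∀ (x : X) (r : ℝ), 0 < r → ∃ φ : X → ℝ, φ ∈ PE.F ∧
      (∀ y, 0 ≤ φ y ∧ φ y ≤ 1) ∧ (∀ y ∈ ball x r, φ y = 1) ∧
      (∀ y, y ∉ ball x (9*r/8) → φ y = 0) ∧
      PE.E φ ≤ C₀ * (m (ball x r)).toReal / Ψ r :=
    fun x r hr => ratio_cutoff hp PE hΨ hCVD hVD hCcap hAcap hcap hk' hn₂' x hr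
  choose cut hcF hcb hc1 hc0 hcE using hcut
  obtain ⟨θf, hθF, hθb, hθ1x, hθ0x, hθE⟩ :
      ∃ θf : X → X → ℝ, (∀ z, θf z ∈ PE.F) ∧ (∀ z y, 0 ≤ θf z y ∧ θf z y ≤ 1) ∧
        (∀ z, ∀ y ∈ ball z (ε/4), θf z y = 1) ∧
        (∀ z y, y ∉ ball z (9*(ε/4)/8) → θf z y = 0) ∧
        (∀ z, PE.E (θf z) ≤ C₀ * (m (ball z (ε/4))).toReal / Ψ (ε/4)) :=
    ⟨fun z => cut z (ε/4) hε4, fun z => hcF z _ hε4, fun z => hcb z _ hε4,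
      fun z => hc1 z _ hε4, fun z => hc0 z _ hε4, fun z => hcE z _ hε4⟩
  obtain ⟨φf, hφF, hφb, hφ1x, hφ0x, hφE⟩ :
      ∃ φf : X → X → ℝ, (∀ z, φf z ∈ PE.F) ∧ (∀ z y, 0 ≤ φf z y ∧ φf z y ≤ 1) ∧
        (∀ z, ∀ y ∈ ball z ε, φf z y = 1) ∧
        (∀ z y, y ∉ ball z (9*ε/8) → φf z y = 0) ∧
        (∀ z, PE.E (φf z) ≤ C₀ * (m (ball z ε)).toReal / Ψ ε) :=
    ⟨fun z => cut z ε hε, fun z => hcF z _ hε, fun z => hcb z _ hε,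
      fun z => hc1 z _ hε, fun z => hc0 z _ hε, fun z => hcE z _ hε⟩
  clear hcF hcb hc1 hc0 hcE cut
  clear_value C₀ C₂ K
  have hθ1 : ∀ z y, dist y z < ε/4 → θf z y = 1 := fun z y h => hθ1x z y (mem_ball.mpr h)
  have hφ1 : ∀ z y, dist y z < ε → φf z y = 1 := fun z y h => hφ1x z y (mem_ball.mpr h)
  have hθ0 : ∀ z y, ¬ dist y z < 9*ε/32 → θf z y = 0 := by
    intro z y h
    refine hθ0x z y (fun hmem => h ?_)
    rw [mem_ball] at hmem
    linarith
  have hφ0 : ∀ z y, ¬ dist y z < 9*ε/8 → φf z y = 0 := by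
    intro z y h
    exact hφ0x z y (fun hmem => h (by rw [mem_ball] at hmem; linarith))
  -- energy normalization
  set vz : X → ℝ := fun z => (m (ball z ε)).toReal with hvz
  clear_value vz
  have hvz_app : ∀ z, vz z = (m (ball z ε)).toReal := fun z => by rw [hvz]
  have hvz0 : ∀ z, 0 < vz z := fun z => by
    rw [hvz_app]
    exact ENNReal.toReal_pos (measure_ball_pos m z hε).ne' (hballs z ε)
  have hΨdb : Ψ ε ≤ CΨ^2 * Ψ (ε/4) := by
    have h4 : (2:ℝ)^2 * (ε/4) = ε := by ring
    have h5 := psi_iter hΨ hε4 2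
    rwa [h4] at h5
  have hvw : ∀ z w : X, dist w z < 3*ε → (m (ball w ε)).toReal ≤ CVD^2 * vz z := by
    intro z w hw
    have hsub : ball w ε ⊆ ball z (2^2 * ε) := by
      intro y hy
      rw [mem_ball] at hy ⊢
      calc dist y z ≤ dist y w + dist w z := dist_triangle _ _ _
        _ < ε + 3*ε := by linarith
        _ = 2^2*ε := by ring
    have h1 : m (ball w ε) ≤ (ENNReal.ofReal CVD)^2 * m (ball z ε) :=
      (measure_mono hsub).trans (vd_iter hVD z hε 2)
    have h2 := ENNReal.toReal_mono
      (ENNReal.mul_ne_top (ENNReal.pow_ne_top ENNReal.ofReal_ne_top) (hballs z ε)) h1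
    rw [hvz_app]
    rwa [ENNReal.toReal_mul, ENNReal.toReal_pow, ENNReal.toReal_ofReal hCVD.le] at h2
  have hkeyθ : ∀ z w : X, dist w z < 3*ε → PE.E (θf w) ≤ C₂ * vz z / Ψ ε := by
    intro z w hw
    refine le_trans (hθE w) ?_
    rw [div_le_div_iff₀ hΨ4 hΨε]
    have hX₄ : (m (ball w (ε/4))).toReal ≤ CVD^2 * vz z := by
      refine le_trans ?_ (hvw z w hw)
      exact ENNReal.toReal_mono (hballs w ε) (measure_mono (ball_subset_ball (by linarith)))
    have hX₄0 : 0 ≤ (m (ball w (ε/4))).toReal := ENNReal.toReal_nonneg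
    calc C₀ * (m (ball w (ε/4))).toReal * Ψ ε
        ≤ C₀ * (m (ball w (ε/4))).toReal * (CΨ^2 * Ψ (ε/4)) :=
          mul_le_mul_of_nonneg_left hΨdb (by positivity)
      _ ≤ C₀ * (CVD^2 * vz z) * (CΨ^2 * Ψ (ε/4)) := by
          have := mul_le_mul_of_nonneg_left hX₄ hC₀pos.le
          nlinarith [hΨ4, hCΨ0]
      _ = C₂ * vz z * Ψ (ε/4) := by rw [hC₂]; ring
  have hkeyφ : ∀ z w : X, dist w z < 3*ε → PE.E (φf w) ≤ C₂ * vz z / Ψ ε := by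
    intro z w hw
    refine le_trans (hφE w) ?_
    refine hdivle _ _ _ ?_ hΨε
    have h1 := hvw z w hw
    have h2 : C₀ * (m (ball w ε)).toReal ≤ C₀ * (CVD^2 * vz z) :=
      mul_le_mul_of_nonneg_left h1 hC₀pos.le
    have hCΨ2 : (1:ℝ) ≤ CΨ^2 := one_le_pow₀ hCΨ.le
    have h3 : C₀ * (CVD^2 * vz z) ≤ C₂ * vz z := by
      calc C₀ * (CVD^2 * vz z) = 1 * (C₀ * CVD^2 * vz z) := by ring
        _ ≤ CΨ^2 * (C₀ * CVD^2 * vz z) := mul_le_mul_of_nonneg_right hCΨ2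
            (mul_nonneg (mul_nonneg hC₀pos.le (sq_nonneg _)) (hvz0 z).le)
        _ = C₂ * vz z := by rw [hC₂]; ring
    linarith
  -- finite neighbor sets
  have h3ε : 0 < 3*ε := by linarith
  have hcnt3 : 2*(3*ε) + ε/2 ≤ 2^4 * (ε/2) := by norm_num; linarith
  have hVpair : ∀ S : Set X, S ⊆ V → S.Pairwise (fun a b => ε ≤ dist a b) :=
    fun S hS a ha b hb hab => hVsep a (hS ha) b (hS hb) hab
  have hWfin : ∀ z : X, (V ∩ ball z (3*ε)).Finite := fun z =>
    sep_finite hCVD hVD z h3ε hε hcnt3 _ Set.inter_subset_right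
      (hVpair _ Set.inter_subset_left)
  obtain ⟨Wfin, hWmem⟩ : ∃ W : X → Finset X,
      ∀ z w, w ∈ W z ↔ (w ∈ V ∧ dist w z < 3*ε) :=
    ⟨fun z => (hWfin z).toFinset, fun z w => by
      simp [Set.Finite.mem_toFinset]⟩
  have hWsubV : ∀ z, ↑(Wfin z) ⊆ V := fun z w hw => ((hWmem z w).mp hw).1
  have hWcard : ∀ z, ((Wfin z).card : ℝ) ≤ CVD^4 := by
    intro z
    refine count_sep hCVD hVD z h3ε hε hcnt3 (Wfin z) ?_ ?_
    · intro w hw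
      exact mem_ball.mpr ((hWmem z w).mp hw).2
    · exact hVpair _ (hWsubV z)
  set θl : X → X → ℝ := fun z => ∑ w ∈ Wfin z, θf w with hθl
  set hlf : X → X → ℝ := fun z => ∑ w ∈ Wfin z, φf w with hhl
  set uf : X → X → ℝ := fun z => φf z - φf z * θl z with huf
  set ψ : X → X → ℝ :=
    fun z => if z ∈ V then θf z + (uf z + uf z * (recipm ∘ hlf z)) else 0 with hψ
  clear_value θl hlf uf ψ
  -- pointwise sums
  have hθl_apply : ∀ z y, θl z y = ∑ w ∈ Wfin z, θf w y := by
    intro z y; rw [hθl]; exact Finset.sum_apply _ _ _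
  have hhl_apply : ∀ z y, hlf z y = ∑ w ∈ Wfin z, φf w y := by
    intro z y; rw [hhl]; exact Finset.sum_apply _ _ _
  -- sum of thetas over a subset of V is at most 1
  have hθsum_le1 : ∀ (s : Finset X), ↑s ⊆ V → ∀ y, (∑ w ∈ s, θf w y) ≤ 1 := by
    intro s hs y
    by_cases hex : ∃ w₀ ∈ s, θf w₀ y ≠ 0
    · obtain ⟨w₀, hw₀s, hw₀⟩ := hex
      have heq : ∑ w ∈ s, θf w y = θf w₀ y := by
        refine Finset.sum_eq_single_of_mem w₀ hw₀s ?_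
        intro b hb hbne
        by_contra hb0
        have hd1 : dist y b < 9*ε/32 := by
          by_contra hd; exact hb0 (hθ0 b y hd)
        have hd2 : dist y w₀ < 9*ε/32 := by
          by_contra hd; exact hw₀ (hθ0 w₀ y hd)
        have hsep := hVsep b (hs hb) w₀ (hs hw₀s) hbne
        have htri : dist b w₀ ≤ dist b y + dist y w₀ := dist_triangle _ _ _
        rw [dist_comm b y] at htri
        linarith
      rw [heq]; exact (hθb w₀ y).2
    · push_neg at hex
      rw [Finset.sum_eq_zero hex]; norm_num
  have hθlb : ∀ z y, 0 ≤ θl z y ∧ θl z y ≤ 1 := by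
    intro z y
    rw [hθl_apply]
    exact ⟨Finset.sum_nonneg (fun w _ => (hθb w y).1), hθsum_le1 _ (hWsubV z) y⟩
  have hhlb : ∀ z y, 0 ≤ hlf z y := by
    intro z y
    rw [hhl_apply]
    exact Finset.sum_nonneg (fun w _ => (hφb w y).1)
  have h1p : (0:ℝ) ≤ 1/p := div_nonneg zero_le_one (by linarith)
  -- memberships and energy bounds for local sums
  have hθlFE : ∀ z, θl z ∈ PE.F ∧
      PE.E (θl z) ^ (1/p) ≤ ∑ w ∈ Wfin z, PE.E (θf w) ^ (1/p) := by
    intro z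
    obtain ⟨h1, h2⟩ := PE_sum_mem PE hp (Wfin z) θf (fun w _ => hθF w)
    exact ⟨by rw [hθl]; exact h1, by rw [hθl]; exact h2⟩
  have hhlFE : ∀ z, hlf z ∈ PE.F ∧
      PE.E (hlf z) ^ (1/p) ≤ ∑ w ∈ Wfin z, PE.E (φf w) ^ (1/p) := by
    intro z
    obtain ⟨h1, h2⟩ := PE_sum_mem PE hp (Wfin z) φf (fun w _ => hφF w)
    exact ⟨by rw [hhl]; exact h1, by rw [hhl]; exact h2⟩
  set γ : X → ℝ := fun z => (C₂ * vz z / Ψ ε) ^ (1/p) with hγ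
  clear_value γ
  have hγ_app : ∀ z, γ z = (C₂ * vz z / Ψ ε) ^ (1/p) := fun z => by rw [hγ]
  have hbase : ∀ z, 0 ≤ C₂ * vz z / Ψ ε :=
    fun z => div_nonneg (mul_nonneg hC₂pos.le (hvz0 z).le) hΨε.le
  have hγ0 : ∀ z, 0 ≤ γ z := fun z => by rw [hγ_app]; exact Real.rpow_nonneg (hbase z) _
  have hsumθ : ∀ z, PE.E (θl z) ^ (1/p) ≤ CVD^4 * γ z := by
    intro z
    refine le_trans (hθlFE z).2 ?_
    calc ∑ w ∈ Wfin z, PE.E (θf w) ^ (1/p) ≤ ∑ _w ∈ Wfin z, γ z := by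
          refine Finset.sum_le_sum (fun w hw => ?_)
          rw [hγ_app]
          exact Real.rpow_le_rpow (PE.nonneg _ (hθF w))
            (hkeyθ z w ((hWmem z w).mp hw).2) h1p
      _ = ((Wfin z).card : ℝ) * γ z := by rw [Finset.sum_const, nsmul_eq_mul]
      _ ≤ CVD^4 * γ z := mul_le_mul_of_nonneg_right (hWcard z) (hγ0 z)
  have hsumφ : ∀ z, PE.E (hlf z) ^ (1/p) ≤ CVD^4 * γ z := by
    intro z
    refine le_trans (hhlFE z).2 ?_
    calc ∑ w ∈ Wfin z, PE.E (φf w) ^ (1/p) ≤ ∑ _w ∈ Wfin z, γ z := by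
          refine Finset.sum_le_sum (fun w hw => ?_)
          rw [hγ_app]
          exact Real.rpow_le_rpow (PE.nonneg _ (hφF w))
            (hkeyφ z w ((hWmem z w).mp hw).2) h1p
      _ = ((Wfin z).card : ℝ) * γ z := by rw [Finset.sum_const, nsmul_eq_mul]
      _ ≤ CVD^4 * γ z := mul_le_mul_of_nonneg_right (hWcard z) (hγ0 z)
  have hθγ : ∀ z, PE.E (θf z) ^ (1/p) ≤ γ z := by
    intro z
    rw [hγ_app]
    exact Real.rpow_le_rpow (PE.nonneg _ (hθF z))
      (hkeyθ z z (by rw [dist_self]; linarith)) h1p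
  have hφγ : ∀ z, PE.E (φf z) ^ (1/p) ≤ γ z := by
    intro z
    rw [hγ_app]
    exact Real.rpow_le_rpow (PE.nonneg _ (hφF z))
      (hkeyφ z z (by rw [dist_self]; linarith)) h1p
  -- product memberships
  have habs1φ : ∀ z y, |φf z y| ≤ 1 := fun z y =>
    abs_le.mpr ⟨by linarith [(hφb z y).1], (hφb z y).2⟩
  have habs1θl : ∀ z y, |θl z y| ≤ 1 := fun z y =>
    abs_le.mpr ⟨by linarith [(hθlb z y).1], (hθlb z y).2⟩
  have hmulFE : ∀ z, φf z * θl z ∈ PE.F ∧ PE.E (φf z * θl z) ^ (1/p) ≤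
      3 * (PE.E (φf z) ^ (1/p) + PE.E (θl z) ^ (1/p)) :=
    fun z => PE_mul_mem PE hp (hφF z) (hθlFE z).1 (habs1φ z) (habs1θl z)
  have hufFE : ∀ z, uf z ∈ PE.F ∧ PE.E (uf z) ^ (1/p) ≤
      PE.E (φf z) ^ (1/p) + PE.E (φf z * θl z) ^ (1/p) := by
    intro z
    constructor
    · rw [huf]; exact PE_sub_mem PE (hφF z) (hmulFE z).1
    · rw [huf]; exact PE_E_sub_rpow_le PE hp (hφF z) (hmulFE z).1
  have hufval : ∀ z y, uf z y = φf z y - φf z y * θl z y := by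
    intro z y
    rw [huf]; simp only [Pi.sub_apply, Pi.mul_apply]
  have hufb : ∀ z y, 0 ≤ uf z y ∧ uf z y ≤ 1 - θl z y := by
    intro z y
    have hb := hφb z y
    have ht := hθlb z y
    rw [hufval]
    constructor
    · nlinarith
    · nlinarith
  have habs1uf : ∀ z y, |uf z y| ≤ 1 := by
    intro z y
    have h1 := hufb z y
    have h2 := hθlb z y
    exact abs_le.mpr ⟨by linarith, by linarith⟩
  have hκFE : ∀ z, (recipm ∘ hlf z) ∈ PE.F ∧
      PE.E (recipm ∘ hlf z) ^ (1/p) ≤ PE.E (hlf z) ^ (1/p) :=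
    fun z => PE_contraction PE hp recipm_continuous recipm_zero
      (fun a b => recipm_lip a b) (hhlFE z).1
  have habs1κ : ∀ z y, |(recipm ∘ hlf z) y| ≤ 1 := fun z y => recipm_abs_le_one _
  have hukFE : ∀ z, uf z * (recipm ∘ hlf z) ∈ PE.F ∧
      PE.E (uf z * (recipm ∘ hlf z)) ^ (1/p) ≤
      3 * (PE.E (uf z) ^ (1/p) + PE.E (recipm ∘ hlf z) ^ (1/p)) :=
    fun z => PE_mul_mem PE hp (hufFE z).1 (hκFE z).1 (habs1uf z) (habs1κ z)
  -- A-sets for the partition identity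
  have hAfin : ∀ y : X, (V ∩ ball y (9*ε/8)).Finite := by
    intro y
    refine sep_finite hCVD hVD y h3ε hε hcnt3 _ ?_ (hVpair _ Set.inter_subset_left)
    intro w hw
    have h2 := hw.2
    rw [mem_ball] at h2 ⊢
    linarith
  obtain ⟨Af, hAmem⟩ : ∃ A : X → Finset X, ∀ y w, w ∈ A y ↔ (w ∈ V ∧ dist w y < 9*ε/8) :=
    ⟨fun y => (hAfin y).toFinset, fun y w => by simp [Set.Finite.mem_toFinset]⟩
  refine ⟨ψ, ?_, ?_⟩
  · -- (CO1) and (CO3)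
    intro z hzV
    have hψz : ψ z = θf z + (uf z + uf z * (recipm ∘ hlf z)) := by
      rw [hψ]; simp only [if_pos hzV]
    have hψval : ∀ y, ψ z y = θf z y + (uf z y + uf z y * recipm (hlf z y)) := by
      intro y
      rw [hψz]; simp only [Pi.add_apply, Pi.mul_apply, Function.comp_apply]
    have hmem : ψ z ∈ PE.F := by
      rw [hψz]
      exact PE.add_mem _ (hθF z) _ (PE.add_mem _ (hufFE z).1 _ (hukFE z).1)
    have hθθl : ∀ y, θf z y ≤ θl z y := by
      intro y
      rw [hθl_apply]
      exact Finset.single_le_sum (fun w _ => (hθb w y).1)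
        ((hWmem z z).mpr ⟨hzV, by rw [dist_self]; linarith⟩)
    refine ⟨hmem, ?_, ?_, ?_, ?_⟩
    · -- bounds
      intro y
      rw [hψval y]
      have h1 := hθb z y
      have h2 := hufb z y
      have h3 := hθlb z y
      have hκ1 := recipm_nonpos (hlf z y)
      have hκ2 := recipm_ge (hlf z y)
      have h4 := hθθl y
      constructor
      · nlinarith [mul_nonneg h2.1 (by linarith : (0:ℝ) ≤ 1 + recipm (hlf z y))]
      · nlinarith [mul_nonneg h2.1 (neg_nonneg.mpr hκ1)]
    · -- equals 1 on the small ball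
      intro y hy
      rw [mem_ball] at hy
      have ha : θf z y = 1 := hθ1 z y hy
      have hθlv : θl z y = 1 := le_antisymm (hθlb z y).2 (by rw [← ha]; exact hθθl y)
      have hu : uf z y = 0 := by rw [hufval, hθlv]; ring
      rw [hψval y, ha, hu]; ring
    · -- vanishes outside the big ball
      intro y hy
      have hd : ¬ dist y z < 5*ε/4 := fun hc => hy (mem_ball.mpr hc)
      have h1 : θf z y = 0 := hθ0 z y (fun hc => hd (by linarith))
      have h2 : φf z y = 0 := hφ0 z y (fun hc => hd (by linarith))
      have hu : uf z y = 0 := by rw [hufval, h2]; ring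
      rw [hψval y, h1, hu]; ring
    · -- energy bound
      have e1 : PE.E (ψ z) ^ (1/p) ≤ PE.E (θf z) ^ (1/p) +
          (PE.E (uf z) ^ (1/p) + PE.E (uf z * (recipm ∘ hlf z)) ^ (1/p)) := by
        rw [hψz]
        refine le_trans (PE.norm_triangle _ (hθF z) _
          (PE.add_mem _ (hufFE z).1 _ (hukFE z).1)) ?_
        have h2 := PE.norm_triangle _ (hufFE z).1 _ (hukFE z).1
        linarith
      have e3 := (hufFE z).2
      have e4 := (hmulFE z).2
      have e5 := (hukFE z).2
      have e6 := (hκFE z).2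
      have e7 := hθγ z
      have e8 := hφγ z
      have e9 := hsumθ z
      have e10 := hsumφ z
      have hγz := hγ0 z
      have hEψrpow : PE.E (ψ z) ^ (1/p) ≤ K * γ z := by
        have hKγ : K * γ z = 17 * γ z + 15 * (CVD^4 * γ z) := by rw [hK]; ring
        rw [hKγ]
        linarith
      have hEψ : PE.E (ψ z) ≤ K^p * C₂ * vz z / Ψ ε := by
        have h1 : PE.E (ψ z) = (PE.E (ψ z) ^ (1/p)) ^ p :=
          (rpow_p_cancel hp (PE.nonneg _ hmem)).symm
        have h2 : (PE.E (ψ z) ^ (1/p)) ^ p ≤ K^p * (C₂ * vz z / Ψ ε) := by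
          calc (PE.E (ψ z) ^ (1/p)) ^ p ≤ (K * γ z) ^ p :=
                Real.rpow_le_rpow (Real.rpow_nonneg (PE.nonneg _ hmem) _) hEψrpow
                  (by linarith)
            _ = K^p * (γ z)^p := Real.mul_rpow hKpos.le (hγ0 z)
            _ = K^p * (C₂ * vz z / Ψ ε) := by rw [hγ_app, rpow_p_cancel hp (hbase z)]
        rw [h1]
        calc (PE.E (ψ z) ^ (1/p)) ^ p ≤ K^p * (C₂ * vz z / Ψ ε) := h2
          _ = K^p * C₂ * vz z / Ψ ε := by ring
      calc ENNReal.ofReal (PE.E (ψ z)) ≤ ENNReal.ofReal (K^p * C₂ * vz z / Ψ ε) :=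
            ENNReal.ofReal_le_ofReal hEψ
        _ = ENNReal.ofReal (K^p * C₂) * m (ball z ε) / ENNReal.ofReal (Ψ ε) := by
            rw [ENNReal.ofReal_div_of_pos hΨε,
              ENNReal.ofReal_mul (mul_nonneg (Real.rpow_nonneg hKpos.le _) hC₂pos.le),
              hvz_app, ENNReal.ofReal_toReal (hballs z ε)]
  · -- (CO2): partition of unity
    intro y
    set s : Finset ↥V := Finset.preimage (Af y) Subtype.val
      (Subtype.val_injective.injOn) with hs
    have hzero : ∀ z : ↥V, z ∉ s → ψ (z : X) y = 0 := by
      rintro ⟨z, hzV⟩ hzs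
      have hzd : ¬ dist z y < 9*ε/8 := by
        intro hc
        exact hzs (by rw [hs, Finset.mem_preimage]; exact (hAmem y z).mpr ⟨hzV, hc⟩)
      have hθz : θf z y = 0 := by
        refine hθ0 z y ?_
        rw [dist_comm]
        intro hc
        exact hzd (by linarith)
      have hφz : φf z y = 0 := by
        refine hφ0 z y ?_
        rw [dist_comm]
        exact hzd
      have hu : uf z y = 0 := by rw [hufval, hφz]; ring
      have hψz : ψ z = θf z + (uf z + uf z * (recipm ∘ hlf z)) := by
        rw [hψ]; simp only [if_pos hzV]
      show ψ z y = 0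
      rw [hψz]
      simp only [Pi.add_apply, Pi.mul_apply, Function.comp_apply, hθz, hu]
      ring
    rw [tsum_eq_sum hzero]
    have hsum_pre : ∑ z ∈ s, ψ (z : X) y = ∑ w ∈ Af y, ψ w y := by
      rw [hs]
      refine Finset.sum_preimage Subtype.val (Af y) _ (fun w => ψ w y) ?_
      intro w hw hwr
      exact absurd (((hAmem y w).mp hw).1) (by rwa [Subtype.range_coe] at hwr)
    rw [hsum_pre]
    set Θy := ∑ w ∈ Af y, θf w y with hΘ
    set Hy := ∑ w ∈ Af y, φf w y with hH
    have hHy1 : (1:ℝ) ≤ Hy := by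
      obtain ⟨w₀, hw₀V, hw₀d⟩ := hVcov y
      have hw₀A : w₀ ∈ Af y := (hAmem y w₀).mpr ⟨hw₀V, by linarith⟩
      have h1 : φf w₀ y = 1 := hφ1 w₀ y (by rw [dist_comm]; exact hw₀d)
      rw [hH]
      calc (1:ℝ) = φf w₀ y := h1.symm
        _ ≤ _ := Finset.single_le_sum (fun w _ => (hφb w y).1) hw₀A
    have hterm : ∀ w ∈ Af y, ψ w y = θf w y + φf w y * ((1 - Θy) * Hy⁻¹) := by
      intro w hw
      obtain ⟨hwV, hwd⟩ := (hAmem y w).mp hw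
      have hsub : Af y ⊆ Wfin w := by
        intro v hv
        obtain ⟨hvV, hvd⟩ := (hAmem y v).mp hv
        refine (hWmem w v).mpr ⟨hvV, ?_⟩
        calc dist v w ≤ dist v y + dist y w := dist_triangle _ _ _
          _ < 9*ε/8 + 9*ε/8 := by rw [dist_comm y w]; linarith
          _ ≤ 3*ε := by linarith
      have hθeq : θl w y = Θy := by
        rw [hθl_apply, hΘ]
        symm
        refine Finset.sum_subset hsub ?_
        intro v hvW hvA
        refine hθ0 v y ?_
        rw [dist_comm]
        intro hc
        exact hvA ((hAmem y v).mpr ⟨((hWmem w v).mp hvW).1, by linarith⟩)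
      have hHeq : hlf w y = Hy := by
        rw [hhl_apply, hH]
        symm
        refine Finset.sum_subset hsub ?_
        intro v hvW hvA
        refine hφ0 v y ?_
        rw [dist_comm]
        intro hc
        exact hvA ((hAmem y v).mpr ⟨((hWmem w v).mp hvW).1, by linarith⟩)
      have hψw : ψ w = θf w + (uf w + uf w * (recipm ∘ hlf w)) := by
        rw [hψ]; simp only [if_pos hwV]
      rw [hψw]
      simp only [Pi.add_apply, Pi.mul_apply, Function.comp_apply]
      rw [hufval, hθeq, hHeq]
      have hrec : recipm Hy = Hy⁻¹ - 1 := by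
        have h0 := recipm_of_one_le hHy1
        linarith
      rw [hrec]
      ring
    rw [Finset.sum_congr rfl hterm]
    rw [Finset.sum_add_distrib, ← Finset.sum_mul]
    rw [← hΘ, ← hH]
    have hH0 : Hy ≠ 0 := by linarith
    field_simp
    ring
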